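/- Consider the regulator R^Λ(p) := exp(−‖p‖²/Λ²) on ℝ⁴. For every natural number k and every multi-index w ∈ ℕ⁴ there exists a constant c > 0 such that for all Λ > 0 and all p ∈ ℝ⁴, |∂_p^w ∂_Λ^k exp(−‖p‖²/Λ²)| ≤ c · max(‖p‖, Λ)^{−k−|w|} · exp(−‖p‖²/(2Λ²)), where ∂_p^w denotes the iterated partial derivative in p of multi-index w, ∂_Λ^k the k-th derivative in Λ, and |w| = w₁+w₂+w₃+w₄. -/

import Mathlib

open Polynomial

abbrev E4 := EuclideanSpace ℝ (Fin 4)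

/-- Partial derivative in coordinate direction `i`. -/
noncomputable def pdR (i : Fin 4) (f : E4 → ℝ) : E4 → ℝ :=
  fun p => fderiv ℝ f p (EuclideanSpace.single i 1)

/-- Iterated partial derivative `∂^w` for a multi-index `w : ℕ⁴`. -/
noncomputable def pdMultiR (w : Fin 4 → ℕ) (f : E4 → ℝ) : E4 → ℝ :=
  (pdR 0)^[w 0] ((pdR 1)^[w 1] ((pdR 2)^[w 2] ((pdR 3)^[w 3] f)))

noncomputable def ssq (q : E4) : ℝ := ∑ i, (q i)^2

lemma norm_sq_eq_ssq (p : E4) : ‖p‖^2 = ssq p := by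
  rw [EuclideanSpace.norm_eq, Real.sq_sqrt (by positivity)]
  simp [ssq, sq_abs]

lemma ssq_nonneg (p : E4) : 0 ≤ ssq p := Finset.sum_nonneg fun _ _ => sq_nonneg _

lemma abs_coord_le (p : E4) (i : Fin 4) : |p i| ≤ ‖p‖ := by
  have h : (p i)^2 ≤ ssq p :=
    Finset.single_le_sum (f := fun j => (p j)^2) (fun j _ => sq_nonneg _) (Finset.mem_univ i)
  rw [← norm_sq_eq_ssq] at h
  rw [← Real.sqrt_sq_eq_abs, ← Real.sqrt_sq (norm_nonneg p)]
  exact Real.sqrt_le_sqrt h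

lemma hasFDerivAt_coord (i : Fin 4) (p : E4) :
    HasFDerivAt (fun q : E4 => q i) (EuclideanSpace.proj i : E4 →L[ℝ] ℝ) p := by
  have h := (EuclideanSpace.proj i : E4 →L[ℝ] ℝ).hasFDerivAt (x := p)
  exact h

noncomputable def TT (a : Fin 4 → ℕ) (m : ℕ) (P : Polynomial ℝ) : ℝ → E4 → ℝ :=
  fun Λ q => (∏ i, q i ^ a i) *
    ((Λ⁻¹)^m * (P.eval (ssq q * (Λ⁻¹)^2) * Real.exp (-(ssq q * (Λ⁻¹)^2))))

def SG (n : ℤ) : Set (ℝ → E4 → ℝ) :=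
  {F | ∃ (a : Fin 4 → ℕ) (m : ℕ) (P : Polynomial ℝ), ((∑ i, (a i : ℤ)) - m = n) ∧ F = TT a m P}

lemma hasFDerivAt_TT (a : Fin 4 → ℕ) (m : ℕ) (P : Polynomial ℝ) (Λ : ℝ) (p : E4) :
    ∃ D : E4 →L[ℝ] ℝ, HasFDerivAt (TT a m P Λ) D p ∧ ∀ j : Fin 4,
      D (EuclideanSpace.single j 1) =
        (a j : ℝ) * TT (Function.update a j (a j - 1)) m P Λ p
        + 2 * TT (Function.update a j (a j + 1)) (m + 2) (P.derivative - P) Λ p := by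
  have hssq : HasFDerivAt ssq
      (∑ i, ((2:ℝ) * p i ^ (2-1)) • (EuclideanSpace.proj i : E4 →L[ℝ] ℝ)) p := by
    exact HasFDerivAt.fun_sum fun i _ => by
      have h := (hasDerivAt_pow 2 (p i)).comp_hasFDerivAt p (hasFDerivAt_coord i p)
      exact h
  have hprod : HasFDerivAt (fun q : E4 => ∏ i, q i ^ a i)
      (∑ i, (∏ l ∈ Finset.univ.erase i, p l ^ a l) •
        (((a i : ℝ) * p i ^ (a i - 1)) • (EuclideanSpace.proj i : E4 →L[ℝ] ℝ))) p :=
    HasFDerivAt.finset_prod fun i _ =>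
      (hasDerivAt_pow (a i) (p i)).comp_hasFDerivAt p (hasFDerivAt_coord i p)
  have hu := hssq.mul_const ((Λ⁻¹)^2)
  have heval := (P.hasDerivAt (ssq p * (Λ⁻¹)^2)).comp_hasFDerivAt p hu
  have hexp := (hu.neg).exp
  have hG := (heval.mul hexp).const_mul ((Λ⁻¹)^m)
  have hT := hprod.mul hG
  refine ⟨_, hT, fun j => ?_⟩
  have hsingle : ∀ i : Fin 4, (EuclideanSpace.single j (1:ℝ)) i = if i = j then 1 else 0 := by
    intro i; simp [EuclideanSpace.single_apply]
  have hprodupd : ∀ b : ℕ, (∏ i, p i ^ (Function.update a j b i))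
      = p j ^ b * ∏ l ∈ Finset.univ.erase j, p l ^ a l := by
    intro b
    rw [← Finset.mul_prod_erase Finset.univ _ (Finset.mem_univ j)]
    rw [Function.update_self]
    congr 1
    exact Finset.prod_congr rfl fun l hl => by
      rw [Function.update_of_ne (Finset.ne_of_mem_erase hl)]
  simp only [ContinuousLinearMap.add_apply, ContinuousLinearMap.smul_apply,
    ContinuousLinearMap.neg_apply, ContinuousLinearMap.coe_sum', Finset.sum_apply,
    smul_eq_mul, PiLp.proj_apply, Function.comp_apply, pow_one,
    hsingle, mul_ite, mul_one, mul_zero, Finset.sum_ite_eq', Finset.mem_univ, if_true]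
  rw [TT, TT]
  simp only [hprodupd, Polynomial.eval_sub, Function.comp, pow_one, Pi.neg_apply, Pi.mul_apply]
  rw [← Finset.mul_prod_erase Finset.univ (fun l => p l ^ a l) (Finset.mem_univ j)]
  ring

lemma pdR_TT (a : Fin 4 → ℕ) (m : ℕ) (P : Polynomial ℝ) (Λ : ℝ) (j : Fin 4) :
    pdR j (TT a m P Λ) = fun p =>
      (a j : ℝ) * TT (Function.update a j (a j - 1)) m P Λ p
      + 2 * TT (Function.update a j (a j + 1)) (m + 2) (P.derivative - P) Λ p := by
  funext p
  obtain ⟨D, hD, hval⟩ := hasFDerivAt_TT a m P Λ p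
  rw [pdR, hD.fderiv]
  exact hval j

lemma diff_TT (a : Fin 4 → ℕ) (m : ℕ) (P : Polynomial ℝ) (Λ : ℝ) :
    Differentiable ℝ (TT a m P Λ) := fun p =>
  ((hasFDerivAt_TT a m P Λ p).choose_spec.1).differentiableAt

lemma sum_update_int (a : Fin 4 → ℕ) (j : Fin 4) (b : ℕ) :
    (∑ i, ((Function.update a j b i : ℕ) : ℤ))
      = b + (∑ i, ((a i : ℕ) : ℤ)) - a j := by
  have h1 : ∀ i ∈ Finset.univ, ((Function.update a j b i : ℕ) : ℤ)
      = Function.update (fun i => ((a i : ℕ) : ℤ)) j (b : ℤ) i := by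
    intro i _
    rcases eq_or_ne i j with rfl | h
    · simp
    · simp [Function.update_of_ne h]
  rw [Finset.sum_congr rfl h1, Finset.sum_update_of_mem (Finset.mem_univ j),
    Finset.sdiff_singleton_eq_erase,
    ← Finset.add_sum_erase Finset.univ (fun i => ((a i : ℕ) : ℤ)) (Finset.mem_univ j)]
  ring

lemma span_pdR (j : Fin 4) {n : ℤ} {F : ℝ → E4 → ℝ}
    (hF : F ∈ Submodule.span ℝ (SG n)) :
    ∃ F' ∈ Submodule.span ℝ (SG (n - 1)), ∀ Λ : ℝ,
      Differentiable ℝ (F Λ) ∧ pdR j (F Λ) = F' Λ := by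
  induction hF using Submodule.span_induction with
  | mem F hFmem =>
    obtain ⟨a, m, P, hdeg, rfl⟩ := hFmem
    by_cases haj : a j = 0
    · refine ⟨(2:ℝ) • TT (Function.update a j (a j + 1)) (m + 2) (P.derivative - P),
        Submodule.smul_mem _ _ (Submodule.subset_span
          ⟨_, _, _, by rw [sum_update_int]; push_cast; omega, rfl⟩),
        fun Λ => ⟨diff_TT a m P Λ, ?_⟩⟩
      rw [pdR_TT]
      funext p
      simp [haj]
    · refine ⟨(a j : ℝ) • TT (Function.update a j (a j - 1)) m P
          + (2:ℝ) • TT (Function.update a j (a j + 1)) (m + 2) (P.derivative - P),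
        Submodule.add_mem _
          (Submodule.smul_mem _ _ (Submodule.subset_span
            ⟨_, _, _, by rw [sum_update_int]; push_cast; omega, rfl⟩))
          (Submodule.smul_mem _ _ (Submodule.subset_span
            ⟨_, _, _, by rw [sum_update_int]; push_cast; omega, rfl⟩)),
        fun Λ => ⟨diff_TT a m P Λ, ?_⟩⟩
      rw [pdR_TT]
      funext p
      simp [smul_eq_mul]
  | zero =>
    refine ⟨0, Submodule.zero_mem _, fun Λ => ⟨differentiable_const 0, ?_⟩⟩
    funext p
    simp only [pdR]
    rw [show ((0 : ℝ → E4 → ℝ) Λ) = (fun _ : E4 => (0:ℝ)) from rfl]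
    simp
  | add F G hFm hGm ihF ihG =>
    obtain ⟨F', hF', hFe⟩ := ihF
    obtain ⟨G', hG', hGe⟩ := ihG
    refine ⟨F' + G', Submodule.add_mem _ hF' hG', fun Λ => ?_⟩
    have hdF := (hFe Λ).1; have hdG := (hGe Λ).1
    refine ⟨by exact hdF.add hdG, ?_⟩
    funext p
    have : ((F + G) Λ) = (fun q => F Λ q + G Λ q) := rfl
    rw [this]
    simp only [pdR]
    rw [fderiv_fun_add (hdF p) (hdG p)]
    have e1 := congrFun (hFe Λ).2 p
    have e2 := congrFun (hGe Λ).2 p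
    simp only [pdR] at e1 e2
    simp [e1, e2]
  | smul r F hFm ihF =>
    obtain ⟨F', hF', hFe⟩ := ihF
    refine ⟨r • F', Submodule.smul_mem _ _ hF', fun Λ => ?_⟩
    have hdF := (hFe Λ).1
    refine ⟨by exact hdF.const_smul r, ?_⟩
    funext p
    have hrw : ((r • F) Λ) = (fun q => r • F Λ q) := rfl
    rw [hrw]
    simp only [pdR]
    rw [fderiv_fun_const_smul (hdF p) r]
    have e1 := congrFun (hFe Λ).2 p
    simp only [pdR] at e1
    simp [e1]

lemma span_iter (j : Fin 4) (N : ℕ) : ∀ {n : ℤ} {F : ℝ → E4 → ℝ},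
    F ∈ Submodule.span ℝ (SG n) →
    ∃ F' ∈ Submodule.span ℝ (SG (n - N)), ∀ Λ : ℝ, (pdR j)^[N] (F Λ) = F' Λ := by
  induction N with
  | zero => exact fun {n F} hF => ⟨F, by simpa using hF, fun Λ => rfl⟩
  | succ N ih =>
    intro n F hF
    obtain ⟨G, hG, hGe⟩ := span_pdR j hF
    obtain ⟨F', hF', hFe⟩ := ih hG
    refine ⟨F', ?_, fun Λ => ?_⟩
    · have he : n - 1 - (N:ℤ) = n - ((N+1 : ℕ) : ℤ) := by push_cast; ring
      rwa [he] at hF'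
    · rw [Function.iterate_succ_apply, (hGe Λ).2, hFe Λ]

lemma span_multi (w : Fin 4 → ℕ) {n : ℤ} {F : ℝ → E4 → ℝ}
    (hF : F ∈ Submodule.span ℝ (SG n)) :
    ∃ F' ∈ Submodule.span ℝ (SG (n - (∑ i, (w i : ℤ)))), ∀ Λ : ℝ,
      pdMultiR w (F Λ) = F' Λ := by
  obtain ⟨F3, h3, e3⟩ := span_iter 3 (w 3) hF
  obtain ⟨F2, h2, e2⟩ := span_iter 2 (w 2) h3
  obtain ⟨F1, h1, e1⟩ := span_iter 1 (w 1) h2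
  obtain ⟨F0, h0, e0⟩ := span_iter 0 (w 0) h1
  refine ⟨F0, ?_, fun Λ => ?_⟩
  · have he : n - (w 3 : ℤ) - (w 2 : ℤ) - (w 1 : ℤ) - (w 0 : ℤ)
        = n - (∑ i, (w i : ℤ)) := by
      rw [Fin.sum_univ_four]; ring
    rwa [he] at h0
  · rw [pdMultiR, e3 Λ, e2 Λ, e1 Λ, e0 Λ]

lemma one_add_pow_le (N : ℕ) {u : ℝ} (hu : 0 ≤ u) :
    (1+u)^N ≤ (2*N+2)^N * Real.exp (u/2) := by
  have h1 : (1+u) ≤ (2*(N:ℝ)+2) * Real.exp (u/(2*N+2)) := by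
    have he : u/(2*(N:ℝ)+2) + 1 ≤ Real.exp (u/(2*N+2)) := Real.add_one_le_exp _
    have hc : (2*(N:ℝ)+2) * (u/(2*N+2) + 1) = u + (2*N+2) := by field_simp
    have hm := mul_le_mul_of_nonneg_left he (by positivity : (0:ℝ) ≤ 2*(N:ℝ)+2)
    rw [hc] at hm
    have : (0:ℝ) ≤ (N:ℝ) := Nat.cast_nonneg N
    linarith
  calc (1+u)^N ≤ ((2*(N:ℝ)+2) * Real.exp (u/(2*N+2)))^N := by
        exact pow_le_pow_left₀ (by linarith) h1 N
    _ = (2*(N:ℝ)+2)^N * Real.exp (u/(2*N+2))^N := by rw [mul_pow]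
    _ ≤ (2*(N:ℝ)+2)^N * Real.exp (u/2) := by
        gcongr
        rw [← Real.exp_nat_mul]
        apply Real.exp_le_exp.2
        have h2 : (0:ℝ) < 2*(N:ℝ)+2 := by positivity
        rw [mul_div_assoc', div_le_div_iff₀ h2 (by norm_num : (0:ℝ) < 2)]
        nlinarith

lemma eval_abs_le (P : Polynomial ℝ) {u : ℝ} (hu : 0 ≤ u) :
    |P.eval u| ≤ (∑ k ∈ Finset.range (P.natDegree+1), |P.coeff k|) * (1+u)^P.natDegree := by
  rw [Polynomial.eval_eq_sum_range, Finset.sum_mul]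
  refine (Finset.abs_sum_le_sum_abs _ _).trans (Finset.sum_le_sum fun k hk => ?_)
  rw [abs_mul, abs_pow, abs_of_nonneg hu]
  refine mul_le_mul_of_nonneg_left ?_ (abs_nonneg _)
  calc u^k ≤ (1+u)^k := pow_le_pow_left₀ hu (by linarith) k
    _ ≤ (1+u)^P.natDegree := pow_le_pow_right₀ (by linarith) (Nat.lt_succ_iff.1 (Finset.mem_range.1 hk))

lemma max_div_le (p : E4) {Λ : ℝ} (hΛ : 0 < Λ) :
    max ‖p‖ Λ / Λ ≤ 1 + ssq p * (Λ⁻¹)^2 := by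
  have hu : ssq p * (Λ⁻¹)^2 = (‖p‖/Λ)^2 := by
    rw [← norm_sq_eq_ssq]; field_simp
  rw [hu, div_le_iff₀ hΛ, max_le_iff]
  have hx : ‖p‖/Λ * Λ = ‖p‖ := div_mul_cancel₀ _ hΛ.ne'
  constructor
  · nlinarith [sq_nonneg (‖p‖/Λ - 1/2), sq_nonneg (‖p‖/Λ), hΛ]
  · nlinarith [sq_nonneg (‖p‖/Λ), hΛ]

lemma TT_bound (a : Fin 4 → ℕ) (m : ℕ) (P : Polynomial ℝ) :
    ∃ c > 0, ∀ Λ : ℝ, 0 < Λ → ∀ p : E4,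
      |TT a m P Λ p| ≤ c * max ‖p‖ Λ ^ ((∑ i, (a i : ℤ)) - m)
        * Real.exp (-‖p‖ ^ 2 / (2 * Λ ^ 2)) := by
  set d := P.natDegree with hd
  set N := m + d with hN
  set cP := ∑ k ∈ Finset.range (d+1), |P.coeff k| with hcP
  have hcP0 : 0 ≤ cP := Finset.sum_nonneg fun _ _ => abs_nonneg _
  refine ⟨(cP+1) * (2*N+2)^N, by positivity, fun Λ hΛ p => ?_⟩
  set A := ∑ i, a i with hA
  set u := ssq p * (Λ⁻¹)^2 with hu
  have hu0 : 0 ≤ u := mul_nonneg (ssq_nonneg p) (by positivity)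
  set M := max ‖p‖ Λ with hM
  have hM0 : 0 < M := lt_of_lt_of_le hΛ (le_max_right _ _)
  have hpM : ‖p‖ ≤ M := le_max_left _ _
  have hMz : (0:ℝ) ≤ M ^ ((A:ℤ) - m) := zpow_nonneg hM0.le _
  have h1 : |∏ i, p i ^ a i| ≤ M ^ A := by
    rw [Finset.abs_prod]
    calc ∏ i, |p i ^ a i| ≤ ∏ i, M ^ a i := by
          refine Finset.prod_le_prod (fun i _ => abs_nonneg _) (fun i _ => ?_)
          rw [abs_pow]
          exact pow_le_pow_left₀ (abs_nonneg _) ((abs_coord_le p i).trans hpM) _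
      _ = M ^ A := Finset.prod_pow_eq_pow_sum _ _ _
  have h2 : |P.eval u| ≤ cP * (1+u)^d := eval_abs_le P hu0
  have key : M ^ A * (Λ⁻¹)^m ≤ M ^ ((A:ℤ) - m) * (1+u)^m := by
    have hMd : M / Λ ≤ 1 + u := max_div_le p hΛ
    have hq : M ^ A * (Λ⁻¹)^m = M ^ ((A:ℤ) - m) * (M/Λ)^m := by
      rw [zpow_sub₀ hM0.ne', zpow_natCast, zpow_natCast, div_pow]
      field_simp
      rw [← mul_pow, one_div, inv_mul_cancel₀ hΛ.ne', one_pow]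
    rw [hq]
    refine mul_le_mul_of_nonneg_left (pow_le_pow_left₀ (by positivity) hMd m) hMz
  have habs : |TT a m P Λ p| ≤ M ^ A * ((Λ⁻¹)^m * ((cP * (1+u)^d) * Real.exp (-u))) := by
    simp only [TT]
    rw [← hu, abs_mul, abs_mul, abs_mul, abs_of_pos (Real.exp_pos _),
      abs_of_pos (by positivity : (0:ℝ) < (Λ⁻¹)^m)]
    refine mul_le_mul h1 ?_ (by positivity) (by positivity)
    refine mul_le_mul_of_nonneg_left ?_ (by positivity)
    exact mul_le_mul_of_nonneg_right h2 (Real.exp_pos _).le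
  calc |TT a m P Λ p| ≤ M^A * ((Λ⁻¹)^m * ((cP * (1+u)^d) * Real.exp (-u))) := habs
    _ = (M^A * (Λ⁻¹)^m) * (cP * ((1+u)^d * Real.exp (-u))) := by ring
    _ ≤ (M ^ ((A:ℤ)-m) * (1+u)^m) * (cP * ((1+u)^d * Real.exp (-u))) := by
        refine mul_le_mul_of_nonneg_right key (by positivity)
    _ = cP * (((1+u)^N * Real.exp (-u)) * M ^ ((A:ℤ)-m)) := by
        rw [hN, pow_add]; ring
    _ ≤ cP * ((((2*(N:ℝ)+2)^N * Real.exp (u/2)) * Real.exp (-u)) * M ^ ((A:ℤ)-m)) := by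
        refine mul_le_mul_of_nonneg_left (mul_le_mul_of_nonneg_right
          (mul_le_mul_of_nonneg_right (one_add_pow_le N hu0) (Real.exp_pos _).le) hMz) hcP0
    _ = (cP * (2*(N:ℝ)+2)^N) * M ^ ((A:ℤ)-m) * Real.exp (u/2 - u) := by
        have he : Real.exp (u/2 - u) = Real.exp (u/2) * Real.exp (-u) := by
          rw [← Real.exp_add]; ring_nf
        rw [he]; ring
    _ ≤ ((cP+1) * (2*(N:ℝ)+2)^N) * M ^ ((A:ℤ)-m) * Real.exp (u/2 - u) := by
        refine mul_le_mul_of_nonneg_right (mul_le_mul_of_nonneg_right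
          (mul_le_mul_of_nonneg_right (by linarith) (by positivity)) hMz) (Real.exp_pos _).le
    _ = ((cP+1) * (2*(N:ℝ)+2)^N) * M ^ ((∑ i, (a i:ℤ)) - m) * Real.exp (-‖p‖^2/(2*Λ^2)) := by
        have e1 : ((A:ℕ) : ℤ) = (∑ i, (a i:ℤ)) := by rw [hA]; push_cast; ring
        have e2 : u/2 - u = -‖p‖^2/(2*Λ^2) := by
          rw [hu, ← norm_sq_eq_ssq]
          field_simp
          ring
        rw [e1, e2]

lemma span_bound {n : ℤ} {F : ℝ → E4 → ℝ} (hF : F ∈ Submodule.span ℝ (SG n)) :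
    ∃ c > 0, ∀ Λ : ℝ, 0 < Λ → ∀ p : E4,
      |F Λ p| ≤ c * max ‖p‖ Λ ^ n * Real.exp (-‖p‖ ^ 2 / (2 * Λ ^ 2)) := by
  induction hF using Submodule.span_induction with
  | mem F hFmem =>
    obtain ⟨a, m, P, hdeg, rfl⟩ := hFmem
    obtain ⟨c, hc, hb⟩ := TT_bound a m P
    exact ⟨c, hc, fun Λ hΛ p => by rw [← hdeg]; exact hb Λ hΛ p⟩
  | zero =>
    refine ⟨1, one_pos, fun Λ hΛ p => ?_⟩
    have hM : (0:ℝ) < max ‖p‖ Λ := lt_of_lt_of_le hΛ (le_max_right _ _)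
    have : |(0 : ℝ → E4 → ℝ) Λ p| = 0 := by norm_num
    rw [this]
    positivity
  | add F G _ _ ihF ihG =>
    obtain ⟨c1, hc1, h1⟩ := ihF
    obtain ⟨c2, hc2, h2⟩ := ihG
    refine ⟨c1+c2, by linarith, fun Λ hΛ p => ?_⟩
    have e : (F+G) Λ p = F Λ p + G Λ p := rfl
    rw [e]
    calc |F Λ p + G Λ p| ≤ |F Λ p| + |G Λ p| := abs_add_le _ _
      _ ≤ c1 * max ‖p‖ Λ ^ n * Real.exp (-‖p‖ ^ 2 / (2 * Λ ^ 2))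
          + c2 * max ‖p‖ Λ ^ n * Real.exp (-‖p‖ ^ 2 / (2 * Λ ^ 2)) :=
        add_le_add (h1 Λ hΛ p) (h2 Λ hΛ p)
      _ = (c1+c2) * max ‖p‖ Λ ^ n * Real.exp (-‖p‖ ^ 2 / (2 * Λ ^ 2)) := by ring
  | smul r F _ ihF =>
    obtain ⟨c, hc, h⟩ := ihF
    refine ⟨(|r|+1)*c, by positivity, fun Λ hΛ p => ?_⟩
    have hM : (0:ℝ) < max ‖p‖ Λ := lt_of_lt_of_le hΛ (le_max_right _ _)
    have hnn : (0:ℝ) ≤ max ‖p‖ Λ ^ n * Real.exp (-‖p‖ ^ 2 / (2 * Λ ^ 2)) :=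
      mul_nonneg (zpow_nonneg hM.le n) (Real.exp_pos _).le
    have e : (r • F) Λ p = r * F Λ p := rfl
    rw [e, abs_mul]
    calc |r| * |F Λ p| ≤ |r| * (c * max ‖p‖ Λ ^ n * Real.exp (-‖p‖ ^ 2 / (2 * Λ ^ 2))) :=
        mul_le_mul_of_nonneg_left (h Λ hΛ p) (abs_nonneg r)
      _ = (|r| * c) * (max ‖p‖ Λ ^ n * Real.exp (-‖p‖ ^ 2 / (2 * Λ ^ 2))) := by ring
      _ ≤ ((|r|+1) * c) * (max ‖p‖ Λ ^ n * Real.exp (-‖p‖ ^ 2 / (2 * Λ ^ 2))) :=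
        mul_le_mul_of_nonneg_right
          (mul_le_mul_of_nonneg_right (by linarith) hc.le) hnn
      _ = (|r|+1) * c * max ‖p‖ Λ ^ n * Real.exp (-‖p‖ ^ 2 / (2 * Λ ^ 2)) := by ring

noncomputable def Qp : ℕ → Polynomial ℝ
  | 0 => 1
  | (k+1) => C (-(k:ℝ)) * Qp k + C 2 * X * (Qp k - derivative (Qp k))

lemma hasDerivAt_gOne (r : ℝ) (k : ℕ) {Λ : ℝ} (hΛ : Λ ≠ 0) :
    HasDerivAt (fun L : ℝ => (L⁻¹)^k * ((Qp k).eval (r * (L⁻¹)^2) * Real.exp (-(r * (L⁻¹)^2))))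
      ((Λ⁻¹)^(k+1) * ((Qp (k+1)).eval (r * (Λ⁻¹)^2) * Real.exp (-(r * (Λ⁻¹)^2)))) Λ := by
  have hinv : HasDerivAt (fun L : ℝ => L⁻¹) (-(Λ^2)⁻¹) Λ := hasDerivAt_inv hΛ
  have h1 := hinv.pow k
  have h2 := (hinv.pow 2).const_mul r
  have heval := ((Qp k).hasDerivAt (r * (Λ⁻¹)^2)).comp Λ h2
  have hexp := (h2.neg).exp
  have h6 := h1.mul (heval.mul hexp)
  refine h6.congr_deriv ?_
  simp only [Qp, Polynomial.eval_add, Polynomial.eval_mul, Polynomial.eval_sub,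
    Polynomial.eval_C, Polynomial.eval_X, Function.comp, pow_one,
    Pi.pow_apply, Pi.neg_apply, Pi.mul_apply, Pi.one_apply]
  cases k with
  | zero =>
    simp only [Nat.cast_zero, pow_zero, pow_one, zero_sub, Nat.zero_sub]
    field_simp
    ring
  | succ k =>
    simp only [Nat.add_sub_cancel, Nat.cast_add, Nat.cast_one]
    field_simp
    have h2 : (1 / Λ) ^ 2 * Λ ^ 2 = 1 := by rw [← mul_pow, one_div, inv_mul_cancel₀ hΛ, one_pow]
    linear_combination ((k:ℝ) + 1) * (1 / Λ) ^ k * eval (r / Λ ^ 2) (Qp (k + 1)) * h2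

lemma iteratedDeriv_exp_eq (r : ℝ) (k : ℕ) {Λ : ℝ} (hΛ : 0 < Λ) :
    iteratedDeriv k (fun L : ℝ => Real.exp (-r / L ^ 2)) Λ
      = (Λ⁻¹)^k * ((Qp k).eval (r * (Λ⁻¹)^2) * Real.exp (-(r * (Λ⁻¹)^2))) := by
  induction k generalizing Λ with
  | zero =>
    simp only [iteratedDeriv_zero, Qp, Polynomial.eval_one, pow_zero, one_mul]
    congr 1
    field_simp
  | succ k ih =>
    rw [iteratedDeriv_succ]
    have hev : iteratedDeriv k (fun L : ℝ => Real.exp (-r / L ^ 2))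
        =ᶠ[nhds Λ] fun L => (L⁻¹)^k * ((Qp k).eval (r * (L⁻¹)^2) * Real.exp (-(r * (L⁻¹)^2))) := by
      filter_upwards [eventually_gt_nhds hΛ] with L hL using ih hL
    rw [hev.deriv_eq, (hasDerivAt_gOne r k hΛ.ne').deriv]

theorem stmt11 (k : ℕ) (w : Fin 4 → ℕ) :
    ∃ c > 0, ∀ Λ : ℝ, 0 < Λ → ∀ p : E4,
      |pdMultiR w
          (fun q : E4 => iteratedDeriv k (fun L : ℝ => Real.exp (-‖q‖ ^ 2 / L ^ 2)) Λ) p| ≤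
        c * max ‖p‖ Λ ^ (-(k : ℤ) - (∑ i, w i : ℤ)) * Real.exp (-‖p‖ ^ 2 / (2 * Λ ^ 2)) := by
  have hmem : TT (fun _ => 0) k (Qp k) ∈ Submodule.span ℝ (SG (-(k:ℤ))) :=
    Submodule.subset_span ⟨fun _ => 0, k, Qp k, by simp, rfl⟩
  obtain ⟨F', hF', hFe⟩ := span_multi w hmem
  obtain ⟨c, hc, hb⟩ := span_bound hF'
  refine ⟨c, hc, fun Λ hΛ p => ?_⟩
  have hfun : (fun q : E4 => iteratedDeriv k (fun L : ℝ => Real.exp (-‖q‖ ^ 2 / L ^ 2)) Λ)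
      = TT (fun _ => 0) k (Qp k) Λ := by
    funext q
    rw [iteratedDeriv_exp_eq (‖q‖^2) k hΛ]
    simp only [TT, pow_zero, Finset.prod_const_one, one_mul, norm_sq_eq_ssq]
  rw [hfun, hFe Λ]
  exact hb Λ hΛ p
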